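/- (de Bruijn–Erdős theorem, inequality part) Let E be a set of n ≥ 2 elements and let L be a family of m proper subsets of E such that every pair of distinct elements of E is contained in exactly one member of L. Then m ≥ n. -/

import Mathlib

theorem deBruijnErdos_count {α : Type*} [DecidableEq α]
    (E : Finset α) (L : Finset (Finset α)) (n m : ℕ)
    (hn : E.card = n) (hm : L.card = m) (hn2 : 2 ≤ n)
    (hL : ∀ l ∈ L, l ⊂ E)
    (hpair : ∀ x ∈ E, ∀ y ∈ E, x ≠ y → ∃! l, l ∈ L ∧ x ∈ l ∧ y ∈ l) :
    n ≤ m := by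
  classical
  by_contra hmn
  push_neg at hmn
  subst hn hm
  have hsub : ∀ l ∈ L, l ⊆ E := fun l hl => (hL l hl).subset
  -- the "line" through two distinct points
  set f : α → α → Finset α := fun x p =>
    if h : ∃ l', l' ∈ L ∧ x ∈ l' ∧ p ∈ l' then h.choose else ∅ with hf
  have hfspec : ∀ x ∈ E, ∀ p ∈ E, x ≠ p →
      f x p ∈ L ∧ x ∈ f x p ∧ p ∈ f x p := by
    intro x hx p hp hne
    have hex : ∃ l', l' ∈ L ∧ x ∈ l' ∧ p ∈ l' := (hpair x hx p hp hne).exists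
    simp only [hf, dif_pos hex]
    exact hex.choose_spec
  set r : α → ℕ := fun x => (L.filter (fun l => x ∈ l)).card with hr
  -- degree bound: if x ∉ l then |l| ≤ r x
  have hdeg : ∀ x ∈ E, ∀ l ∈ L, x ∉ l → l.card ≤ r x := by
    intro x hx l hl hxl
    apply Finset.card_le_card_of_injOn (f x)
    · intro p hp
      have hpE : p ∈ E := hsub l hl hp
      have hne : x ≠ p := fun h => hxl (h ▸ hp)
      obtain ⟨h1, h2, h3⟩ := hfspec x hx p hpE hne
      simp [Finset.mem_filter, h1, h2]
    · intro p hp q hq hfq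
      by_contra hpq
      have hpE : p ∈ E := hsub l hl hp
      have hqE : q ∈ E := hsub l hl hq
      obtain ⟨hp1, hp2, hp3⟩ := hfspec x hx p hpE (fun h => hxl (h ▸ hp))
      obtain ⟨hq1, hq2, hq3⟩ := hfspec x hx q hqE (fun h => hxl (h ▸ hq))
      have hexu := hpair p hpE q hqE hpq
      have h1 : l = f x p := hexu.unique ⟨hl, hp, hq⟩ ⟨hp1, hp3, hfq ▸ hq3⟩
      exact hxl (h1 ▸ hp2)
  -- every point is on at least one line
  have hrpos : ∀ x ∈ E, 1 ≤ r x := by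
    intro x hx
    obtain ⟨y, hy, hyx⟩ := Finset.exists_mem_ne (s := E) (by omega) x
    obtain ⟨h1, h2, h3⟩ := hfspec x hx y hy (Ne.symm hyx)
    have : f x y ∈ L.filter (fun l => x ∈ l) := Finset.mem_filter.mpr ⟨h1, h2⟩
    exact Finset.card_pos.mpr ⟨_, this⟩
  -- some line avoids x
  have hrlt : ∀ x ∈ E, r x < L.card := by
    intro x hx
    obtain ⟨y, hy, hyx⟩ := Finset.exists_mem_ne (s := E) (by omega) x
    obtain ⟨h1, h2, h3⟩ := hfspec x hx y hy (Ne.symm hyx)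
    obtain ⟨z, hzE, hzl⟩ := Finset.exists_of_ssubset (hL _ h1)
    have hzy : z ≠ y := fun h => hzl (h ▸ h3)
    obtain ⟨g1, g2, g3⟩ := hfspec y hy z hzE (Ne.symm hzy)
    have hxg : x ∉ f y z := by
      intro hxg
      have hexu := hpair x hx y hy (Ne.symm hyx)
      have : f x y = f y z := hexu.unique ⟨h1, h2, h3⟩ ⟨g1, hxg, g2⟩
      exact hzl (this ▸ g3)
    have hsub2 : L.filter (fun l => x ∈ l) ⊂ L := by
      refine ⟨Finset.filter_subset _ _, fun hss => ?_⟩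
      have := hss g1
      rw [Finset.mem_filter] at this
      exact hxg this.2
    exact Finset.card_lt_card hsub2
  set n := E.card with hnn
  set m := L.card with hmm
  obtain ⟨x0, hx0⟩ := Finset.card_pos.mp (by omega : 0 < n)
  have hm0 : 0 < m := lt_of_le_of_lt (Nat.zero_le _) (hrlt x0 hx0)
  -- cardinality of lines avoiding a point
  have hcard1 : ∀ x ∈ E, (L.filter (fun l => x ∉ l)).card = m - r x := by
    intro x hx
    have := Finset.card_filter_add_card_filter_not (s := L)
      (p := fun l => x ∈ l)
    simp only [hr] at *
    omega
  have hcard2 : ∀ l ∈ L, (E.filter (fun x => x ∉ l)).card = n - l.card := by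
    intro l hl
    have h1 : E.filter (fun x => x ∈ l) = l := by
      rw [Finset.filter_mem_eq_inter]
      exact Finset.inter_eq_right.mpr (hsub l hl)
    have := Finset.card_filter_add_card_filter_not (s := E)
      (p := fun x => x ∈ l)
    rw [h1] at this
    omega
  have hlcard : ∀ l ∈ L, l.card < n := fun l hl => Finset.card_lt_card (hL l hl)
  -- the two weight functions
  set F : α → ℚ := fun x => 1/(n*((m:ℚ) - r x)) with hF
  set G : Finset α → ℚ := fun l => 1/(m*((n:ℚ) - l.card)) with hG
  have key1 : ∑ x ∈ E, ∑ l ∈ L.filter (fun l => x ∉ l), F x = 1 := by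
    have : ∀ x ∈ E, ∑ l ∈ L.filter (fun l => x ∉ l), F x = 1/(n:ℚ) := by
      intro x hx
      rw [Finset.sum_const, hcard1 x hx, nsmul_eq_mul,
        Nat.cast_sub (le_of_lt (hrlt x hx)), hF]
      have h1 : ((m:ℚ) - r x) ≠ 0 := by
        have := hrlt x hx
        have : (r x : ℚ) < m := by exact_mod_cast this
        linarith
      have h2 : (n:ℚ) ≠ 0 := by positivity
      field_simp
    rw [Finset.sum_congr rfl this, Finset.sum_const, nsmul_eq_mul]
    have h2 : (n:ℚ) ≠ 0 := by positivity
    field_simp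
    rfl
  have key2 : ∑ l ∈ L, ∑ x ∈ E.filter (fun x => x ∉ l), G l = 1 := by
    have : ∀ l ∈ L, ∑ x ∈ E.filter (fun x => x ∉ l), G l = 1/(m:ℚ) := by
      intro l hl
      rw [Finset.sum_const, hcard2 l hl, nsmul_eq_mul,
        Nat.cast_sub (le_of_lt (hlcard l hl)), hG]
      have h1 : ((n:ℚ) - l.card) ≠ 0 := by
        have : (l.card : ℚ) < n := by exact_mod_cast hlcard l hl
        linarith
      have h2 : (m:ℚ) ≠ 0 := by positivity
      field_simp
    rw [Finset.sum_congr rfl this, Finset.sum_const, nsmul_eq_mul]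
    have h2 : (m:ℚ) ≠ 0 := by positivity
    field_simp
    rfl
  have keyswap : ∑ x ∈ E, ∑ l ∈ L.filter (fun l => x ∉ l), G l
      = ∑ l ∈ L, ∑ x ∈ E.filter (fun x => x ∉ l), G l := by
    simp only [Finset.sum_filter]
    exact Finset.sum_comm
  -- strict comparison over the sigma set of incidences
  set S : Finset ((_ : α) × Finset α) :=
    E.sigma (fun x => L.filter (fun l => x ∉ l)) with hS
  have hne : S.Nonempty := by
    obtain ⟨y, hy, hyx⟩ := Finset.exists_mem_ne (s := E) (by omega) x0
    obtain ⟨h1, h2, h3⟩ := hfspec x0 hx0 y hy (Ne.symm hyx)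
    obtain ⟨z, hzE, hzl⟩ := Finset.exists_of_ssubset (hL _ h1)
    exact ⟨⟨z, f x0 y⟩, Finset.mem_sigma.mpr ⟨hzE, Finset.mem_filter.mpr ⟨h1, hzl⟩⟩⟩
  have strict : ∑ x ∈ E, ∑ l ∈ L.filter (fun l => x ∉ l), G l
      < ∑ x ∈ E, ∑ l ∈ L.filter (fun l => x ∉ l), F x := by
    have e1 : ∑ x ∈ E, ∑ l ∈ L.filter (fun l => x ∉ l), G l
        = ∑ p ∈ S, G p.2 := Finset.sum_sigma' E _ (fun _ l => G l)
    have e2 : ∑ x ∈ E, ∑ l ∈ L.filter (fun l => x ∉ l), F x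
        = ∑ p ∈ S, F p.1 := Finset.sum_sigma' E _ (fun x _ => F x)
    rw [e1, e2]
    apply Finset.sum_lt_sum_of_nonempty hne
    rintro ⟨x, l⟩ hp
    rw [hS, Finset.mem_sigma, Finset.mem_filter] at hp
    obtain ⟨hx, hl, hxl⟩ := hp
    have c1 : (l.card : ℚ) ≤ r x := by exact_mod_cast hdeg x hx l hl hxl
    have c2 : (m:ℚ) < n := by exact_mod_cast hmn
    have c3 : (1:ℚ) ≤ r x := by exact_mod_cast hrpos x hx
    have c4 : (r x : ℚ) < m := by exact_mod_cast hrlt x hx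
    have c5 : (l.card : ℚ) < n := by exact_mod_cast hlcard l hl
    have c6 : (0:ℚ) ≤ l.card := Nat.cast_nonneg _
    simp only [hF, hG]
    have hb : (0:ℚ) < (n:ℚ)*((m:ℚ)-(r x : ℚ)) := by nlinarith
    have hlt : (n:ℚ)*((m:ℚ)-(r x : ℚ)) < (m:ℚ)*((n:ℚ)-(l.card:ℚ)) := by nlinarith
    exact one_div_lt_one_div_of_lt hb hlt
  rw [key1, keyswap, key2] at strict
  exact lt_irrefl _ strict
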